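/- Let Γ be a simplicial complex on X = {x₁,...,xₙ} with facets G₁,...,G_μ, let F ⊆ G₁ be a face, x₀ a new vertex, and Γ' = Γ ∪ cone_{x₀}(F). Then the Stanley–Reisner ideal of the Alexander dual of Γ' in K[X ∪ {x₀}] equals m₀R' + x₀·I·R', where I = I_{Γ*} is the Alexander dual ideal of Γ in K[X] and m₀ = ∏_{x_i ∈ (X∪{x₀}) \ (F∪{x₀})} x_i; moreover m₀ is divisible by the generator m₁ = ∏_{x_i ∈ X \ G₁} x_i. -/

import Mathlib

set_option synthInstance.maxHeartbeats 1000000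
set_option maxHeartbeats 1000000

open MvPolynomial Ideal CategoryTheory

noncomputable section

/-- The arithmetical rank of an ideal: the least `r` such that some `r` elements
generate `I` up to radical. -/
noncomputable def ara {R : Type*} [CommRing R] (I : Ideal R) : ℕ :=
  sInf {r | ∃ a : Fin r → R, Ideal.radical (Ideal.span (Set.range a)) = Ideal.radical I}

/-- The height of an ideal: the infimum of the heights of the primes containing it. -/
noncomputable def idealHeight {R : Type*} [CommRing R] (I : Ideal R) : ℕ∞ :=
  ⨅ (P : PrimeSpectrum R) (_ : I ≤ P.asIdeal), Order.height P

/-- `Δ` is a simplicial complex on its vertex set: it contains all singletons and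
is closed under taking subsets. -/
def IsSimplicialComplex {V : Type*} (Δ : Set (Finset V)) : Prop :=
  (∀ v : V, {v} ∈ Δ) ∧ ∀ s ∈ Δ, ∀ t ⊆ s, t ∈ Δ

/-- The Stanley--Reisner ideal of `Δ`: generated by the squarefree monomials
corresponding to non-faces of `Δ`. -/
def SRideal (K : Type*) [Field K] {n : ℕ} (Δ : Set (Finset (Fin n))) :
    Ideal (MvPolynomial (Fin n) K) :=
  Ideal.span {p | ∃ s : Finset (Fin n), s ∉ Δ ∧ p = ∏ i ∈ s, X i}

/-- Adding the cone `cone_{x₀} F` over a face `F`, where `x₀` is the new vertex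
`Fin.last n`. -/
def coneComplex {n : ℕ} (Δ : Set (Finset (Fin n))) (F : Finset (Fin n)) :
    Set (Finset (Fin (n + 1))) :=
  ((fun s : Finset (Fin n) => s.image Fin.castSucc) '' Δ) ∪
    {s | s ⊆ insert (Fin.last n) (F.image Fin.castSucc)}

lemma compl_image {n : ℕ} (t : Finset (Fin n)) :
    (Finset.univ : Finset (Fin (n + 1))) \ t.image Fin.castSucc =
      insert (Fin.last n) ((Finset.univ \ t).image Fin.castSucc) := by
  ext v
  refine Fin.lastCases ?_ ?_ v
  · simp [fun x : Fin n => (Fin.castSucc_lt_last x).ne]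
  · intro i
    simp [Fin.castSucc_injective n |>.eq_iff, (Fin.castSucc_lt_last _).ne]

lemma prod_insert_last {K : Type*} [CommSemiring K] {n : ℕ} (s : Finset (Fin n)) :
    X (Fin.last n) * rename Fin.castSucc (∏ i ∈ s, (X i : MvPolynomial (Fin n) K)) =
      ∏ i ∈ insert (Fin.last n) (s.image Fin.castSucc), X i := by
  rw [Finset.prod_insert (by simp [fun x : Fin n => (Fin.castSucc_lt_last x).ne]), map_prod,
    Finset.prod_image (fun a _ b _ h => Fin.castSucc_injective n h)]
  simp [rename_X]

/-- The Stanley--Reisner ideal of the Alexander dual of `Γ' = Γ ∪ cone_{x₀} F`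
equals `m₀R' + x₀·I·R'`, where `I` is the Alexander dual ideal of `Γ`;
moreover `m₁ = ∏_{x ∉ G₁} x` divides `m₀`. -/
theorem stmt8 (K : Type*) [Field K] (n μ : ℕ) (Γ : Set (Finset (Fin n)))
    (hΓ : IsSimplicialComplex Γ) (G : Fin (μ + 1) → Finset (Fin n))
    (hfaces : ∀ s, s ∈ Γ ↔ ∃ j, s ⊆ G j)
    (hmax : ∀ j k, G j ⊆ G k → j = k)
    (F : Finset (Fin n)) (hF : F ⊆ G 0)
    (I : Ideal (MvPolynomial (Fin n) K))
    (hI : I = Ideal.span (Set.range fun j => ∏ i ∈ Finset.univ \ G j, X i))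
    (m₀ : MvPolynomial (Fin (n + 1)) K)
    (hm₀ : m₀ = ∏ i ∈ Finset.univ \ insert (Fin.last n) (F.image Fin.castSucc), X i) :
    SRideal K {s : Finset (Fin (n + 1)) | Finset.univ \ s ∉ coneComplex Γ F} =
      Ideal.span {m₀} ⊔ Ideal.span
        ((fun p => X (Fin.last n) * p) ''
          (MvPolynomial.rename (Fin.castSucc : Fin n → Fin (n + 1)) ''
            (I : Set (MvPolynomial (Fin n) K)))) ∧
    MvPolynomial.rename (Fin.castSucc : Fin n → Fin (n + 1))
      (∏ i ∈ Finset.univ \ G 0, X i) ∣ m₀ := by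
  constructor
  · apply le_antisymm
    · rw [SRideal]
      apply Ideal.span_le.2
      rintro p ⟨s, hs, rfl⟩
      simp only [Set.mem_setOf_eq, not_not] at hs
      rcases hs with ⟨t, htΓ, hts⟩ | hsub
      · simp only at hts
        have hs' : s = insert (Fin.last n) ((Finset.univ \ t).image Fin.castSucc) := by
          rw [← compl_image, hts]
          simp [Finset.sdiff_sdiff_self_left]
        obtain ⟨j, hj⟩ := (hfaces t).1 htΓ
        have hsub2 : Finset.univ \ G j ⊆ Finset.univ \ t :=
          Finset.sdiff_subset_sdiff (le_refl _) hj
        have hps := Finset.prod_sdiff hsub2 (f := fun i => (X i : MvPolynomial (Fin n) K))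
        have key : (∏ i ∈ s, (X i : MvPolynomial (Fin (n+1)) K)) =
            rename Fin.castSucc (∏ i ∈ (Finset.univ \ t) \ (Finset.univ \ G j), (X i : MvPolynomial (Fin n) K)) *
            (X (Fin.last n) * rename Fin.castSucc (∏ i ∈ Finset.univ \ G j, (X i : MvPolynomial (Fin n) K))) := by
          rw [hs', ← prod_insert_last, ← hps, _root_.map_mul]
          ring
        rw [key]
        apply Ideal.mem_sup_right
        apply Ideal.mul_mem_left
        apply Ideal.subset_span
        refine ⟨rename Fin.castSucc (∏ i ∈ Finset.univ \ G j, (X i : MvPolynomial (Fin n) K)), ⟨_, ?_, rfl⟩, rfl⟩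
        rw [hI]
        exact Ideal.subset_span ⟨j, rfl⟩
      · have hsub' : Finset.univ \ insert (Fin.last n) (F.image Fin.castSucc) ⊆ s := by
          intro x hx
          simp only [Finset.mem_sdiff, Finset.mem_univ, true_and] at hx
          by_contra hxs
          exact hx (hsub (by simp [hxs]))
        apply Ideal.mem_sup_left
        rw [Ideal.mem_span_singleton, hm₀]
        exact Finset.prod_dvd_prod_of_subset _ _ _ hsub'
    · apply sup_le
      · rw [Ideal.span_le, Set.singleton_subset_iff]
        apply Ideal.subset_span
        refine ⟨Finset.univ \ insert (Fin.last n) (F.image Fin.castSucc), ?_, hm₀⟩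
        simp only [Set.mem_setOf_eq, not_not]
        right
        simp [Finset.sdiff_sdiff_self_left, coneComplex]
      · rw [Ideal.span_le]
        rintro q ⟨_, ⟨p, hp, rfl⟩, rfl⟩
        rw [hI] at hp
        induction hp using Submodule.span_induction with
        | mem g hg =>
          obtain ⟨j, rfl⟩ := hg
          show X (Fin.last n) * rename Fin.castSucc
            (∏ i ∈ Finset.univ \ G j, (X i : MvPolynomial (Fin n) K)) ∈ _
          rw [prod_insert_last]
          apply Ideal.subset_span
          refine ⟨_, ?_, rfl⟩
          simp only [Set.mem_setOf_eq, not_not]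
          left
          refine ⟨G j, (hfaces _).2 ⟨j, le_refl _⟩, ?_⟩
          show (G j).image Fin.castSucc = _
          rw [← compl_image]
          simp [Finset.sdiff_sdiff_self_left]
        | zero => simp
        | add p q _ _ hp hq =>
          show X (Fin.last n) * (rename Fin.castSucc) (p + q) ∈ _
          rw [map_add, mul_add]
          exact Ideal.add_mem _ hp hq
        | smul c p _ hp =>
          show X (Fin.last n) * (rename Fin.castSucc) (c * p) ∈ _
          rw [_root_.map_mul, mul_left_comm]
          exact Ideal.mul_mem_left _ _ hp
  · rw [hm₀, map_prod]
    simp only [rename_X]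
    have heq : (∏ x ∈ Finset.univ \ G 0, (X x.castSucc : MvPolynomial (Fin (n+1)) K)) =
        ∏ i ∈ (Finset.univ \ G 0).image Fin.castSucc, X i :=
      (Finset.prod_image (fun a _ b _ h => Fin.castSucc_injective n h)).symm
    rw [heq]
    apply Finset.prod_dvd_prod_of_subset
    intro v hv
    simp only [Finset.mem_image, Finset.mem_sdiff, Finset.mem_univ, true_and] at hv
    obtain ⟨i, hi, rfl⟩ := hv
    simp only [Finset.mem_sdiff, Finset.mem_univ, true_and, Finset.mem_insert,
      Finset.mem_image, not_or]
    refine ⟨(Fin.castSucc_lt_last i).ne, ?_⟩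
    rintro ⟨f, hf, hfe⟩
    exact hi (hF (by rwa [Fin.castSucc_injective n hfe] at hf))
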